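/- For the degenerate Jacobi weight w(x,t) on [0,1], the auxiliary quantities satisfy the sum rule (t−1) R_n − t x_n + α + β + γ + 2n + 1 = 0, where x_n = (α/h_n)∫_0^1 P_n^2 w/y dy and R_n = (β/h_n)∫_0^1 P_n^2 w/(1−y) dy. -/

import Mathlib

open MeasureTheory Polynomial Set

/-- The sum rule `(t−1) R_n − t x_n + α + β + γ + 2n + 1 = 0` for the auxiliary
quantities of the degenerate Jacobi weight. -/
theorem sum_rule (α β γ A B t : ℝ)
    (hα : 0 < α) (hβ : 0 < β) (hγ : 0 < γ)
    (hA : 0 ≤ A) (hAB : 0 ≤ A + B) (ht : t ∈ Set.Ioo (0 : ℝ) 1)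
    (w : ℝ → ℝ)
    (hw : ∀ x, w x = x ^ α * (1 - x) ^ β * |x - t| ^ γ *
      (A + B * (if t < x then (1 : ℝ) else 0)))
    (P : ℕ → Polynomial ℝ) (h : ℕ → ℝ)
    (hmonic : ∀ n, (P n).Monic)
    (hdeg : ∀ n, (P n).natDegree = n)
    (horth : ∀ m n, ∫ x in (0 : ℝ)..1, (P m).eval x * (P n).eval x * w x
      = if m = n then h n else 0)
    (hpos : ∀ n, 0 < h n)
    (n : ℕ) :
    (t - 1) * ((β / h n) * ∫ y in (0 : ℝ)..1, ((P n).eval y) ^ 2 * w y / (1 - y))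
      - t * ((α / h n) * ∫ y in (0 : ℝ)..1, ((P n).eval y) ^ 2 * w y / y)
      + α + β + γ + 2 * n + 1 = 0 := by
  obtain ⟨ht0, ht1⟩ := ht
  set M : ℝ := |A| + |A + B| with hM
  have hM0 : 0 ≤ M := by positivity
  -- w on the left of t
  have hwle : ∀ y : ℝ, y ≤ t → w y = A * (y ^ α * (1 - y) ^ β * (t - y) ^ γ) := by
    intro y hy
    rw [hw, if_neg (not_lt.mpr hy), abs_of_nonpos (by linarith)]
    rw [show -(y - t) = t - y by ring]; ring
  have hwgt : ∀ y : ℝ, t < y → w y = (A + B) * (y ^ α * (1 - y) ^ β * (y - t) ^ γ) := by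
    intro y hy
    rw [hw, if_pos hy, abs_of_pos (by linarith)]; ring
  -- bounds
  have hwnn : ∀ y ∈ Icc (0:ℝ) 1, 0 ≤ w y := by
    intro y hy
    rcases le_or_gt y t with hle | hlt
    · rw [hwle y hle]
      have : 0 ≤ (y:ℝ) ^ α := Real.rpow_nonneg hy.1 _
      have : 0 ≤ (1-y) ^ β := Real.rpow_nonneg (by linarith [hy.2]) _
      have : 0 ≤ (t-y) ^ γ := Real.rpow_nonneg (by linarith) _
      positivity
    · rw [hwgt y hlt]
      have h1 : 0 ≤ (y:ℝ) ^ α := Real.rpow_nonneg hy.1 _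
      have h2 : 0 ≤ (1-y) ^ β := Real.rpow_nonneg (by linarith [hy.2]) _
      have h3 : 0 ≤ (y-t) ^ γ := Real.rpow_nonneg (by linarith) _
      have : 0 ≤ A + B := hAB
      positivity
  have hbl : ∀ y ∈ Ioc (0:ℝ) t, w y ≤ M * y ^ α := by
    intro y hy
    obtain ⟨hy1, hy2⟩ := hy
    rw [hwle y hy2]
    have h1 : 0 ≤ (y:ℝ) ^ α := Real.rpow_nonneg hy1.le _
    have h2 : (1-y) ^ β ≤ 1 := Real.rpow_le_one (by linarith) (by linarith) hβ.le
    have h3 : (t-y) ^ γ ≤ 1 := Real.rpow_le_one (by linarith) (by linarith) hγ.le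
    have h2' : 0 ≤ (1-y) ^ β := Real.rpow_nonneg (by linarith) _
    have h3' : 0 ≤ (t-y) ^ γ := Real.rpow_nonneg (by linarith) _
    have hAM : A ≤ M := by rw [hM]; cases abs_cases A <;> cases abs_cases (A+B) <;> linarith
    calc A * (y ^ α * (1-y) ^ β * (t-y) ^ γ)
        = A * (y ^ α * ((1-y) ^ β * (t-y) ^ γ)) := by ring
      _ ≤ M * (y ^ α * ((1-y) ^ β * (t-y) ^ γ)) := by
          apply mul_le_mul_of_nonneg_right hAM; positivity
      _ ≤ M * (y ^ α * 1) := by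
          apply mul_le_mul_of_nonneg_left _ hM0
          exact mul_le_mul_of_nonneg_left (mul_le_one₀ h2 h3' h3) h1
      _ = M * y ^ α := by ring
  have hbr : ∀ y ∈ Ioc t (1:ℝ), w y ≤ M * (1-y) ^ β := by
    intro y hy
    obtain ⟨hy1, hy2⟩ := hy
    rw [hwgt y hy1]
    have h1 : 0 ≤ (1-y:ℝ) ^ β := Real.rpow_nonneg (by linarith) _
    have h2 : y ^ α ≤ 1 := Real.rpow_le_one (by linarith) hy2 hα.le
    have h3 : (y-t) ^ γ ≤ 1 := Real.rpow_le_one (by linarith) (by linarith) hγ.le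
    have h2' : 0 ≤ (y:ℝ) ^ α := Real.rpow_nonneg (by linarith) _
    have h3' : 0 ≤ (y-t) ^ γ := Real.rpow_nonneg (by linarith) _
    have hAM : A + B ≤ M := by rw [hM]; cases abs_cases A <;> cases abs_cases (A+B) <;> linarith
    calc (A+B) * (y ^ α * (1-y) ^ β * (y-t) ^ γ)
        = (A+B) * ((1-y) ^ β * (y ^ α * (y-t) ^ γ)) := by ring
      _ ≤ M * ((1-y) ^ β * (y ^ α * (y-t) ^ γ)) := by
          apply mul_le_mul_of_nonneg_right hAM; positivity
      _ ≤ M * ((1-y) ^ β * 1) := by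
          apply mul_le_mul_of_nonneg_left _ hM0
          exact mul_le_mul_of_nonneg_left (mul_le_one₀ h2 h3' h3) h1
      _ = M * (1-y) ^ β := by ring
  -- measurability
  have hwm : Measurable w := by
    have : w = fun x => x ^ α * (1 - x) ^ β * |x - t| ^ γ *
      (A + B * (if t < x then (1 : ℝ) else 0)) := funext hw
    rw [this]
    apply Measurable.mul
    · apply Measurable.mul
      · apply Measurable.mul
        · exact (Real.continuous_rpow_const hα.le).measurable
        · exact ((Real.continuous_rpow_const hβ.le).comp
            (continuous_const.sub continuous_id)).measurable
      · exact ((Real.continuous_rpow_const hγ.le).comp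
          ((continuous_id.sub continuous_const).abs)).measurable
    · exact measurable_const.add (measurable_const.mul
        (Measurable.ite (measurableSet_Ioi (a := t)) measurable_const measurable_const))
  -- master integrability criterion
  have master : ∀ F : ℝ → ℝ, Measurable F →
      (∃ C : ℝ, ∀ y ∈ Ioc (0:ℝ) t, ‖F y‖ ≤ C * y ^ (α-1)) →
      (∃ C : ℝ, ∀ y ∈ Ioc t (1:ℝ), ‖F y‖ ≤ C * (1-y) ^ (β-1)) →
      IntervalIntegrable F volume 0 1 := by
    rintro F hF ⟨C1, h1⟩ ⟨C2, h2⟩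
    have i1 : IntegrableOn F (Ioc 0 t) := by
      have base : IntegrableOn (fun y : ℝ => C1 * y ^ (α-1)) (Ioc 0 t) := by
        have := (intervalIntegral.intervalIntegrable_rpow' (r := α - 1) (by linarith)
          (a := 0) (b := t)).const_mul C1
        exact (intervalIntegrable_iff_integrableOn_Ioc_of_le ht0.le).mp this
      exact Integrable.mono' base (hF.aestronglyMeasurable.restrict)
        ((ae_restrict_iff' measurableSet_Ioc).mpr (ae_of_all _ h1))
    have i2 : IntegrableOn F (Ioc t 1) := by
      have base : IntegrableOn (fun y : ℝ => C2 * (1-y) ^ (β-1)) (Ioc t 1) := by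
        have b0 : IntervalIntegrable (fun x : ℝ => x ^ (β-1)) volume 0 1 :=
          intervalIntegral.intervalIntegrable_rpow' (by linarith)
        have b1 : IntervalIntegrable (fun x : ℝ => (1-x) ^ (β-1)) volume (1-0) (1-1) :=
          b0.comp_sub_left 1
        have b2 : IntervalIntegrable (fun x : ℝ => (1-x) ^ (β-1)) volume t 1 := by
          apply (b1.symm.mono_set _)
          rw [Set.uIcc_of_le (by norm_num : (1:ℝ)-1 ≤ 1-0), Set.uIcc_of_le ht1.le]
          exact Set.Icc_subset_Icc (by linarith) (by norm_num)
        exact (intervalIntegrable_iff_integrableOn_Ioc_of_le ht1.le).mp (b2.const_mul C2)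
      exact Integrable.mono' base (hF.aestronglyMeasurable.restrict)
        ((ae_restrict_iff' measurableSet_Ioc).mpr (ae_of_all _ h2))
    rw [intervalIntegrable_iff_integrableOn_Ioc_of_le (by norm_num : (0:ℝ) ≤ 1),
      ← Set.Ioc_union_Ioc_eq_Ioc ht0.le ht1.le]
    exact i1.union i2
  -- rpow step-down facts
  have stepl : ∀ y : ℝ, 0 < y → y ^ α = y ^ (α-1) * y := by
    intro y hy
    rw [← Real.rpow_add_one hy.ne' (α-1)]; norm_num
  have stepr : ∀ y : ℝ, y < 1 → (1-y) ^ β = (1-y) ^ (β-1) * (1-y) := by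
    intro y hy
    rw [← Real.rpow_add_one (by linarith : (0:ℝ) < 1-y).ne' (β-1)]
    norm_num
  -- integrability of the three kinds of pieces
  have pieces : ∀ c : ℝ → ℝ, Continuous c →
      IntervalIntegrable (fun y => c y * w y) volume 0 1 ∧
      IntervalIntegrable (fun y => c y * w y / y) volume 0 1 ∧
      IntervalIntegrable (fun y => c y * w y / (1-y)) volume 0 1 := by
    intro c hc
    obtain ⟨C0, hC0⟩ := isCompact_Icc.exists_bound_of_continuousOn
      (s := Icc (0:ℝ) 1) hc.continuousOn
    set C : ℝ := max C0 0 with hC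
    have hCnn : 0 ≤ C := le_max_right _ _
    have hCb : ∀ y ∈ Icc (0:ℝ) 1, |c y| ≤ C := fun y hy => (hC0 y hy).trans (le_max_left _ _)
    have cm : Measurable c := hc.measurable
    -- common facts
    have keyl : ∀ y ∈ Ioc (0:ℝ) t, |c y| * w y ≤ (C * M) * y ^ (α-1) := by
      intro y hy
      obtain ⟨hy1, hy2⟩ := hy
      have hmem : y ∈ Icc (0:ℝ) 1 := ⟨hy1.le, by linarith⟩
      have e1 : 0 ≤ y ^ (α-1) := Real.rpow_nonneg hy1.le _
      have e2 : y ^ α ≤ y ^ (α-1) := by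
        rw [stepl y hy1]; nlinarith
      have h1 := hwnn y hmem
      have h2 := hbl y ⟨hy1, hy2⟩
      have h3 := hCb y hmem
      calc |c y| * w y ≤ C * (M * y ^ α) := by
            apply mul_le_mul h3 h2 h1 hCnn
        _ = (C * M) * y ^ α := by ring
        _ ≤ (C * M) * y ^ (α-1) := mul_le_mul_of_nonneg_left e2 (by positivity)
    have keyr : ∀ y ∈ Ioc t (1:ℝ), |c y| * w y ≤ (C * M) * (1-y) ^ (β-1) := by
      intro y hy
      obtain ⟨hy1, hy2⟩ := hy
      have hmem : y ∈ Icc (0:ℝ) 1 := ⟨by linarith, hy2⟩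
      have e1 : 0 ≤ (1-y) ^ (β-1) := Real.rpow_nonneg (by linarith) _
      have e2 : (1-y) ^ β ≤ (1-y) ^ (β-1) := by
        rcases eq_or_lt_of_le hy2 with rfl | hlt
        · norm_num
          rw [Real.zero_rpow hβ.ne']
          exact Real.rpow_nonneg le_rfl _
        · rw [stepr y hlt]; nlinarith
      have h1 := hwnn y hmem
      have h2 := hbr y ⟨hy1, hy2⟩
      have h3 := hCb y hmem
      calc |c y| * w y ≤ C * (M * (1-y) ^ β) := by
            apply mul_le_mul h3 h2 h1 hCnn
        _ = (C * M) * (1-y) ^ β := by ring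
        _ ≤ (C * M) * (1-y) ^ (β-1) := mul_le_mul_of_nonneg_left e2 (by positivity)
    refine ⟨?_, ?_, ?_⟩
    · apply master _ ((cm.mul hwm))
      · exact ⟨C * M, fun y hy => by
          rw [Real.norm_eq_abs, Pi.mul_apply, abs_mul, abs_of_nonneg (hwnn y ⟨hy.1.le, by linarith [hy.2]⟩)]
          exact keyl y hy⟩
      · exact ⟨C * M, fun y hy => by
          rw [Real.norm_eq_abs, Pi.mul_apply, abs_mul, abs_of_nonneg (hwnn y ⟨by linarith [hy.1], hy.2⟩)]
          exact keyr y hy⟩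
    · refine master _ ?meas2 ?_ ?_
      case meas2 => exact (cm.mul hwm).div measurable_id
      · refine ⟨C * M, fun y hy => ?_⟩
        obtain ⟨hy1, hy2⟩ := hy
        have hwy := hwnn y ⟨hy1.le, by linarith⟩
        have e0 : 0 ≤ y ^ (α-1) := Real.rpow_nonneg hy1.le _
        rw [Real.norm_eq_abs, abs_div, abs_mul, abs_of_nonneg hwy, abs_of_pos hy1]
        rw [div_le_iff₀ hy1]
        calc |c y| * w y ≤ C * (M * y ^ α) :=
              mul_le_mul (hCb y ⟨hy1.le, by linarith⟩) (hbl y ⟨hy1, hy2⟩) hwy hCnn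
          _ = (C * M) * y ^ α := by ring
          _ = (C * M) * y ^ (α-1) * y := by rw [stepl y hy1]; ring
      · refine ⟨C * M / t, fun y hy => ?_⟩
        obtain ⟨hy1, hy2⟩ := hy
        have hwy := hwnn y ⟨by linarith, hy2⟩
        have e1 : 0 ≤ (1-y) ^ (β-1) := Real.rpow_nonneg (by linarith) _
        have hy0 : 0 < y := lt_trans ht0 hy1
        rw [Real.norm_eq_abs, abs_div, abs_mul, abs_of_nonneg hwy, abs_of_pos hy0]
        have key := keyr y ⟨hy1, hy2⟩
        calc |c y| * w y / y ≤ (C * M) * (1-y) ^ (β-1) / t :=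
              div_le_div₀ (by positivity) (keyr y ⟨hy1, hy2⟩) ht0 hy1.le
          _ = C * M / t * (1-y) ^ (β-1) := by ring
    · refine master _ ?meas3 ?_ ?_
      case meas3 => exact (cm.mul hwm).div (measurable_const.sub measurable_id)
      · refine ⟨C * M / (1-t), fun y hy => ?_⟩
        obtain ⟨hy1, hy2⟩ := hy
        have hwy := hwnn y ⟨hy1.le, by linarith⟩
        have e0 : 0 ≤ y ^ (α-1) := Real.rpow_nonneg hy1.le _
        have h1y : (0:ℝ) < 1 - y := by linarith
        have h1t : (0:ℝ) < 1 - t := by linarith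
        rw [Real.norm_eq_abs, abs_div, abs_mul, abs_of_nonneg hwy, abs_of_pos h1y]
        have key := keyl y ⟨hy1, hy2⟩
        calc |c y| * w y / (1-y) ≤ (C * M) * y ^ (α-1) / (1-t) :=
              div_le_div₀ (by positivity) (keyl y ⟨hy1, hy2⟩) h1t (by linarith)
          _ = C * M / (1-t) * y ^ (α-1) := by ring
      · refine ⟨C * M, fun y hy => ?_⟩
        obtain ⟨hy1, hy2⟩ := hy
        rcases eq_or_lt_of_le hy2 with rfl | hlt
        · have hw1 : w 1 = 0 := by
            simp [hwgt 1 hy1, Real.zero_rpow hβ.ne']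
          rw [hw1, mul_zero, zero_div, norm_zero]
          positivity
        · have hwy := hwnn y ⟨by linarith, hy2⟩
          have h1y : (0:ℝ) < 1 - y := by linarith
          rw [Real.norm_eq_abs, abs_div, abs_mul, abs_of_nonneg hwy, abs_of_pos h1y]
          rw [div_le_iff₀ h1y]
          calc |c y| * w y ≤ C * (M * (1-y) ^ β) :=
                mul_le_mul (hCb y ⟨by linarith, hy2⟩) (hbr y ⟨hy1, hy2⟩) hwy hCnn
            _ = (C * M) * (1-y) ^ β := by ring
            _ = (C * M) * (1-y) ^ (β-1) * (1-y) := by rw [stepr y hlt]; ring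
  -- the weighted-integral functional J
  set J : Polynomial ℝ → ℝ := fun p => ∫ x in (0:ℝ)..1, p.eval x * w x with hJ
  have intPol : ∀ p : Polynomial ℝ, IntervalIntegrable (fun y => p.eval y * w y) volume 0 1 :=
    fun p => (pieces _ p.continuous_aeval).1
  have Jadd : ∀ p q : Polynomial ℝ, J (p + q) = J p + J q := by
    intro p q
    have : ∀ x : ℝ, (p+q).eval x * w x = p.eval x * w x + q.eval x * w x := by
      intro x; simp [add_mul]
    rw [hJ]
    simp only [this]
    exact intervalIntegral.integral_add (intPol p) (intPol q)
  have JC : ∀ (a : ℝ) (p : Polynomial ℝ), J (C a * p) = a * J p := by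
    intro a p
    have : ∀ x : ℝ, (C a * p).eval x * w x = a * (p.eval x * w x) := by
      intro x; simp [mul_assoc]
    rw [hJ]
    simp only [this]
    exact intervalIntegral.integral_const_mul a _
  have horth' : ∀ m k : ℕ, J (P m * P k) = if m = k then h k else 0 := by
    intro m k
    rw [hJ]
    simp only [Polynomial.eval_mul]
    exact horth m k
  have hP0 : P 0 = 1 := (hmonic 0).natDegree_eq_zero.mp (hdeg 0)
  -- orthogonality to lower-degree polynomials
  have span : ∀ m : ℕ, m < n → ∀ q : Polynomial ℝ, q.natDegree ≤ m → J (P n * q) = 0 := by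
    intro m
    induction m with
    | zero =>
      intro hmn q hq
      obtain ⟨a, ha⟩ : ∃ a, q = C a := ⟨q.coeff 0, eq_C_of_natDegree_le_zero hq⟩
      have : P n * q = C a * (P n * P 0) := by rw [ha, hP0]; ring
      rw [this, JC, horth' n 0, if_neg (by omega : n ≠ 0)]
      ring
    | succ m ih =>
      intro hmn q hq
      set a := q.coeff (m+1) with hadef
      set r := q - C a * P (m+1) with hr
      have hrdeg : r.natDegree ≤ m := by
        apply natDegree_le_iff_coeff_eq_zero.mpr
        intro N hN
        rcases eq_or_lt_of_le (Nat.succ_le_of_lt hN) with hNe | hNl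
        · rw [hr]
          simp only [coeff_sub, coeff_C_mul]
          rw [← hNe]
          have : (P (m+1)).coeff (m+1) = 1 := by
            have := (hmonic (m+1)).coeff_natDegree
            rwa [hdeg (m+1)] at this
          rw [this, ← hadef]; ring
        · rw [hr]
          simp only [coeff_sub, coeff_C_mul]
          rw [coeff_eq_zero_of_natDegree_lt (lt_of_le_of_lt hq hNl),
            coeff_eq_zero_of_natDegree_lt (by rw [hdeg]; exact hNl)]
          ring
      have hsplit : P n * q = C a * (P n * P (m+1)) + P n * r := by rw [hr]; ring
      rw [hsplit, Jadd, JC, horth' n (m+1),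
        if_neg (by omega : n ≠ m + 1), ih (by omega) r hrdeg]
      ring
  -- the key orthogonality computation
  have orthQ : ∀ Q : Polynomial ℝ, Q.natDegree ≤ n → J (P n * Q) = Q.coeff n * h n := by
    intro Q hQ
    set a := Q.coeff n with hadef
    set r := Q - C a * P n with hr
    have hsplit : P n * Q = C a * (P n * P n) + P n * r := by rw [hr]; ring
    have hrn : J (P n * r) = 0 := by
      cases n with
      | zero =>
        have hQC : Q = C a := by rw [hadef]; exact eq_C_of_natDegree_le_zero hQ
        have hr0 : r = 0 := by rw [hr, hQC, hP0]; ring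
        rw [hr0, mul_zero, hJ]
        simp
      | succ m =>
        apply span m (by omega) r
        apply natDegree_le_iff_coeff_eq_zero.mpr
        intro N hN
        rcases eq_or_lt_of_le (Nat.succ_le_of_lt hN) with hNe | hNl
        · rw [hr]
          simp only [coeff_sub, coeff_C_mul]
          rw [← hNe]
          have : (P (m+1)).coeff (m+1) = 1 := by
            have := (hmonic (m+1)).coeff_natDegree
            rwa [hdeg (m+1)] at this
          rw [this, ← hadef]; ring
        · rw [hr]
          simp only [coeff_sub, coeff_C_mul]
          rw [coeff_eq_zero_of_natDegree_lt (lt_of_le_of_lt hQ hNl),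
            coeff_eq_zero_of_natDegree_lt (by rw [hdeg]; exact hNl)]
          ring
    rw [hsplit, Jadd, JC, horth' n n, if_pos rfl, hrn]
    ring
  -- the polynomial Qp
  set sc : ℝ := α + β + γ + 1 with hsc
  set Qp : Polynomial ℝ := C 2 * derivative (P n) * (X - C t) + C sc * P n with hQp
  have hQdeg : Qp.natDegree ≤ n := by
    rw [hQp]
    apply le_trans (natDegree_add_le _ _)
    apply max_le
    · cases n with
      | zero =>
        have : derivative (P 0) = 0 := by rw [hP0]; simp
        rw [this]
        simp
      | succ m =>
        apply le_trans natDegree_mul_le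
        have h1 : (C 2 * derivative (P (m+1))).natDegree ≤ m := by
          apply le_trans (natDegree_C_mul_le _ _)
          have := natDegree_derivative_le (P (m+1))
          rw [hdeg (m+1)] at this
          omega
        have h2 : (X - C t).natDegree = 1 := natDegree_X_sub_C t
        omega
    · exact le_trans (natDegree_C_mul_le _ _) (le_of_eq (hdeg n))
  have hQcoeff : Qp.coeff n = 2 * (n:ℝ) + sc := by
    rw [hQp]
    have hc1 : (P n).coeff n = 1 := by
      have := (hmonic n).coeff_natDegree
      rwa [hdeg n] at this
    have hexp : C 2 * derivative (P n) * (X - C t)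
        = C 2 * (derivative (P n) * X) - C (2*t) * derivative (P n) := by
      rw [C_mul]; ring
    rw [coeff_add, hexp, coeff_sub, coeff_C_mul, coeff_C_mul, coeff_C_mul]
    have hderhigh : (derivative (P n)).coeff n = 0 := by
      rw [coeff_derivative]
      rw [coeff_eq_zero_of_natDegree_lt (by rw [hdeg n]; omega)]
      ring
    rw [hderhigh, hc1]
    cases n with
    | zero =>
      rw [coeff_mul_X_zero]
      push_cast; ring
    | succ m =>
      rw [coeff_mul_X, coeff_derivative, hc1]
      push_cast; ring
  have key1 : J (P n * Qp) = (2 * (n:ℝ) + sc) * h n := by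
    rw [orthQ Qp hQdeg, hQcoeff]
  -- the function g (integrand of the FTC identity)
  set g : ℝ → ℝ := fun y => (P n * Qp).eval y * w y
      - (α * t * ((P n).eval y)^2) * w y / y
      - (β * (1-t) * ((P n).eval y)^2) * w y / (1-y) with hg
  have contE2 : Continuous fun y : ℝ => ((P n).eval y)^2 := ((P n).continuous_aeval).pow 2
  have ig1 : IntervalIntegrable (fun y => (P n * Qp).eval y * w y) volume 0 1 :=
    intPol (P n * Qp)
  have ig2 : IntervalIntegrable (fun y => (α * t * ((P n).eval y)^2) * w y / y) volume 0 1 :=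
    (pieces (fun y => α * t * ((P n).eval y)^2) (continuous_const.mul contE2)).2.1
  have ig3 : IntervalIntegrable
      (fun y => (β * (1-t) * ((P n).eval y)^2) * w y / (1-y)) volume 0 1 :=
    (pieces (fun y => β * (1-t) * ((P n).eval y)^2) (continuous_const.mul contE2)).2.2
  have igg : IntervalIntegrable g volume 0 1 := (ig1.sub ig2).sub ig3
  have hsub1 : Set.uIcc (0:ℝ) t ⊆ Set.uIcc (0:ℝ) 1 := by
    rw [Set.uIcc_of_le ht0.le, Set.uIcc_of_le (by norm_num : (0:ℝ) ≤ 1)]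
    exact Set.Icc_subset_Icc le_rfl ht1.le
  have hsub2 : Set.uIcc t (1:ℝ) ⊆ Set.uIcc (0:ℝ) 1 := by
    rw [Set.uIcc_of_le ht1.le, Set.uIcc_of_le (by norm_num : (0:ℝ) ≤ 1)]
    exact Set.Icc_subset_Icc ht0.le le_rfl
  -- left FTC
  set G₁ : ℝ → ℝ := fun y =>
    A * ((P n).eval y)^2 * (y ^ α * ((1-y) ^ β * ((y - t) * (t - y) ^ γ))) with hG₁
  have hG₁cont : Continuous G₁ := by
    rw [hG₁]
    apply Continuous.mul (continuous_const.mul contE2)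
    apply Continuous.mul (Real.continuous_rpow_const hα.le)
    apply Continuous.mul
      ((Real.continuous_rpow_const hβ.le).comp (continuous_const.sub continuous_id))
    exact (continuous_id.sub continuous_const).mul
      ((Real.continuous_rpow_const hγ.le).comp (continuous_const.sub continuous_id))
  have hder1 : ∀ y ∈ Ioo (0:ℝ) t, HasDerivAt G₁ (g y) y := by
    intro y hy
    obtain ⟨hy0, hyt⟩ := hy
    have hy1 : y < 1 := lt_trans hyt ht1
    have h1y : (0:ℝ) < 1 - y := by linarith
    have hty : (0:ℝ) < t - y := by linarith
    have dE : HasDerivAt (fun x : ℝ => ((P n).eval x)^2)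
        ((2:ℝ) * ((P n).eval y) ^ 1 * (derivative (P n)).eval y) y :=
      ((P n).hasDerivAt y).pow 2
    have da : HasDerivAt (fun x : ℝ => x ^ α) (α * y ^ (α-1)) y :=
      Real.hasDerivAt_rpow_const (Or.inl hy0.ne')
    have db : HasDerivAt (fun x : ℝ => (1-x) ^ β) ((-1) * β * (1-y) ^ (β-1)) y :=
      ((hasDerivAt_id y).const_sub 1).rpow_const (Or.inl h1y.ne')
    have dc : HasDerivAt (fun x : ℝ => (t-x) ^ γ) ((-1) * γ * (t-y) ^ (γ-1)) y :=
      ((hasDerivAt_id y).const_sub t).rpow_const (Or.inl hty.ne')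
    have dd : HasDerivAt (fun x : ℝ => x - t) 1 y := (hasDerivAt_id y).sub_const t
    have d4 : HasDerivAt (fun x : ℝ => (x - t) * (t - x) ^ γ)
        (1 * ((t-y) ^ γ) + (y - t) * ((-1) * γ * (t-y) ^ (γ-1))) y := dd.mul dc
    have big := (dE.const_mul A).mul (da.mul (db.mul d4))
    convert big using 1
    case e'_4 => rfl
    case e'_5 => rfl
    case e'_8 => rfl
    rw [hg]
    simp only
    rw [hwle y hyt.le]
    simp only [hQp, eval_mul, eval_add, eval_sub, eval_C, eval_X, Pi.mul_apply]
    rw [stepl y hy0, stepr y hy1,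
      show (t-y) ^ γ = (t-y) ^ (γ-1) * (t-y) by
        rw [← Real.rpow_add_one hty.ne' (γ-1)]; norm_num]
    rw [hsc]
    field_simp
    ring
  have hG₁0 : G₁ 0 = 0 := by
    rw [hG₁]; simp [Real.zero_rpow hα.ne']
  have hG₁t : G₁ t = 0 := by
    rw [hG₁]; simp
  have ftc1 : (∫ y in (0:ℝ)..t, g y) = 0 := by
    rw [intervalIntegral.integral_eq_sub_of_hasDerivAt_of_le ht0.le
      hG₁cont.continuousOn hder1 (igg.mono_set hsub1), hG₁t, hG₁0, sub_zero]
  -- right FTC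
  set G₂ : ℝ → ℝ := fun y =>
    (A+B) * ((P n).eval y)^2 * (y ^ α * ((1-y) ^ β * ((y - t) * (y - t) ^ γ))) with hG₂
  have hG₂cont : Continuous G₂ := by
    rw [hG₂]
    apply Continuous.mul (continuous_const.mul contE2)
    apply Continuous.mul (Real.continuous_rpow_const hα.le)
    apply Continuous.mul
      ((Real.continuous_rpow_const hβ.le).comp (continuous_const.sub continuous_id))
    exact (continuous_id.sub continuous_const).mul
      ((Real.continuous_rpow_const hγ.le).comp (continuous_id.sub continuous_const))
  have hder2 : ∀ y ∈ Ioo t (1:ℝ), HasDerivAt G₂ (g y) y := by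
    intro y hy
    obtain ⟨hyt, hy1⟩ := hy
    have hy0 : 0 < y := lt_trans ht0 hyt
    have h1y : (0:ℝ) < 1 - y := by linarith
    have hty : (0:ℝ) < y - t := by linarith
    have dE : HasDerivAt (fun x : ℝ => ((P n).eval x)^2)
        ((2:ℝ) * ((P n).eval y) ^ 1 * (derivative (P n)).eval y) y :=
      ((P n).hasDerivAt y).pow 2
    have da : HasDerivAt (fun x : ℝ => x ^ α) (α * y ^ (α-1)) y :=
      Real.hasDerivAt_rpow_const (Or.inl hy0.ne')
    have db : HasDerivAt (fun x : ℝ => (1-x) ^ β) ((-1) * β * (1-y) ^ (β-1)) y :=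
      ((hasDerivAt_id y).const_sub 1).rpow_const (Or.inl h1y.ne')
    have dc : HasDerivAt (fun x : ℝ => (x-t) ^ γ) (1 * γ * (y-t) ^ (γ-1)) y :=
      ((hasDerivAt_id y).sub_const t).rpow_const (Or.inl hty.ne')
    have dd : HasDerivAt (fun x : ℝ => x - t) 1 y := (hasDerivAt_id y).sub_const t
    have d4 : HasDerivAt (fun x : ℝ => (x - t) * (x - t) ^ γ)
        (1 * ((y-t) ^ γ) + (y - t) * (1 * γ * (y-t) ^ (γ-1))) y := dd.mul dc
    have big := (dE.const_mul (A+B)).mul (da.mul (db.mul d4))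
    convert big using 1
    case e'_4 => rfl
    case e'_5 => rfl
    case e'_8 => rfl
    rw [hg]
    simp only
    rw [hwgt y hyt]
    simp only [hQp, eval_mul, eval_add, eval_sub, eval_C, eval_X, Pi.mul_apply]
    rw [stepl y hy0, stepr y hy1,
      show (y-t) ^ γ = (y-t) ^ (γ-1) * (y-t) by
        rw [← Real.rpow_add_one hty.ne' (γ-1)]; norm_num]
    rw [hsc]
    field_simp
    ring
  have hG₂1 : G₂ 1 = 0 := by
    rw [hG₂]
    simp [Real.zero_rpow hβ.ne', show (1:ℝ)-1 = 0 by norm_num]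
  have hG₂t : G₂ t = 0 := by
    rw [hG₂]; simp
  have ftc2 : (∫ y in t..(1:ℝ), g y) = 0 := by
    rw [intervalIntegral.integral_eq_sub_of_hasDerivAt_of_le ht1.le
      hG₂cont.continuousOn hder2 (igg.mono_set hsub2), hG₂1, hG₂t, sub_zero]
  have izero : (∫ y in (0:ℝ)..1, g y) = 0 := by
    rw [← intervalIntegral.integral_add_adjacent_intervals
      (igg.mono_set hsub1) (igg.mono_set hsub2), ftc1, ftc2]
    norm_num
  -- split the integral of g
  have esplit : (∫ y in (0:ℝ)..1, g y)
      = J (P n * Qp)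
        - α * t * (∫ y in (0:ℝ)..1, ((P n).eval y)^2 * w y / y)
        - β * (1-t) * (∫ y in (0:ℝ)..1, ((P n).eval y)^2 * w y / (1-y)) := by
    have l1 : (∫ y in (0:ℝ)..1, g y)
        = (∫ y in (0:ℝ)..1, (P n * Qp).eval y * w y)
          - (∫ y in (0:ℝ)..1, (α * t * ((P n).eval y)^2) * w y / y)
          - (∫ y in (0:ℝ)..1, (β * (1-t) * ((P n).eval y)^2) * w y / (1-y)) := by
      rw [hg]
      rw [intervalIntegral.integral_sub (ig1.sub ig2) ig3,
        intervalIntegral.integral_sub ig1 ig2]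
    have l2 : (∫ y in (0:ℝ)..1, (α * t * ((P n).eval y)^2) * w y / y)
        = α * t * (∫ y in (0:ℝ)..1, ((P n).eval y)^2 * w y / y) := by
      rw [← intervalIntegral.integral_const_mul]
      apply intervalIntegral.integral_congr
      intro y _
      ring
    have l3 : (∫ y in (0:ℝ)..1, (β * (1-t) * ((P n).eval y)^2) * w y / (1-y))
        = β * (1-t) * (∫ y in (0:ℝ)..1, ((P n).eval y)^2 * w y / (1-y)) := by
      rw [← intervalIntegral.integral_const_mul]
      apply intervalIntegral.integral_congr
      intro y _
      ring
    rw [l1, l2, l3, hJ]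
  -- conclusion
  have main : (2 * (n:ℝ) + sc) * h n
      - α * t * (∫ y in (0:ℝ)..1, ((P n).eval y)^2 * w y / y)
      - β * (1-t) * (∫ y in (0:ℝ)..1, ((P n).eval y)^2 * w y / (1-y)) = 0 := by
    rw [← key1, ← esplit, izero]
  have hh : h n ≠ 0 := (hpos n).ne'
  rw [hsc] at main
  field_simp
  linear_combination main
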